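/- Let 0 ≤ α < √β < 1 and ε > 0, with weights ϱ_k = (1-α)ε⁻¹(α^{-k} + (1-α²/β)^{-1/2} β^{-k/2}) for k ∈ -ℕ₀, and let g : ℓ_ϱ → ℝ be defined by g(x) = ((1-α)Σ_{k∈-ℕ₀} α^{-k} x_k) / (ε + √((1-β)Σ_{k∈-ℕ₀} β^{-k} x_k²)) (with g(x) = 0 if the denominator is infinite). Then g is Lipschitz continuous with Lipschitz constant 1 with respect to the norm ‖x‖_{ℓ_ϱ} = Σ_{k∈-ℕ₀} ϱ_k |x_k|. -/

import Mathlib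

open scoped ENNReal

noncomputable def n2 (f : ℕ → ℝ) : ℝ := Real.sqrt (∑' k, (f k)^2)

lemma n2_nonneg (f : ℕ → ℝ) : 0 ≤ n2 f := Real.sqrt_nonneg _

lemma memtwo {f : ℕ → ℝ} (hf : Summable fun k => (f k)^2) :
    Memℓp f (2 : ℝ≥0∞) := by
  apply memℓp_gen
  convert hf using 2 with k
  simp [ENNReal.toReal_ofNat, Real.rpow_natCast, sq_abs]

lemma n2_eq {f : ℕ → ℝ} (hf : Summable fun k => (f k)^2) :
    ‖(⟨f, memtwo hf⟩ : lp (fun _ : ℕ => ℝ) 2)‖ = n2 f := by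
  rw [lp.norm_eq_tsum_rpow (by norm_num)]
  rw [n2, Real.sqrt_eq_rpow]
  norm_num

lemma cs_tsum {f g : ℕ → ℝ} (hf : Summable fun k => (f k)^2) (hg : Summable fun k => (g k)^2) :
    |∑' k, f k * g k| ≤ n2 f * n2 g := by
  have := abs_real_inner_le_norm (⟨f, memtwo hf⟩ : lp (fun _ : ℕ => ℝ) 2) ⟨g, memtwo hg⟩
  rw [n2_eq hf, n2_eq hg] at this
  rw [lp.inner_eq_tsum] at this
  rw [tsum_congr fun k => mul_comm (f k) (g k)]
  simpa using this

lemma rt_tsum {f g : ℕ → ℝ} (hf : Summable fun k => (f k)^2) (hg : Summable fun k => (g k)^2) :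
    |n2 f - n2 g| ≤ n2 (fun k => f k - g k) := by
  have hfg : Summable fun k => ((fun k => f k - g k) k)^2 := by
    apply Summable.of_nonneg_of_le (fun k => sq_nonneg _) _ ((hf.add hg).mul_left 2)
    intro k; nlinarith [sq_nonneg (f k + g k)]
  have h := abs_norm_sub_norm_le (⟨f, memtwo hf⟩ : lp (fun _ : ℕ => ℝ) 2) ⟨g, memtwo hg⟩
  rw [n2_eq hf, n2_eq hg] at h
  have he : (⟨f, memtwo hf⟩ : lp (fun _ : ℕ => ℝ) 2) - ⟨g, memtwo hg⟩
      = ⟨fun k => f k - g k, memtwo hfg⟩ := rfl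
  rw [he, n2_eq hfg] at h
  exact h

lemma sq_summable_of_abs {f : ℕ → ℝ} (hf : Summable fun k => |f k|) :
    Summable fun k => (f k)^2 := by
  have hb : ∀ k, (f k)^2 ≤ (∑' j, |f j|) * |f k| := by
    intro k
    have h1 : |f k| ≤ ∑' j, |f j| := Summable.le_tsum hf k (fun j _ => abs_nonneg _)
    calc (f k)^2 = |f k| * |f k| := by rw [← sq_abs, sq]
    _ ≤ (∑' j, |f j|) * |f k| := mul_le_mul_of_nonneg_right h1 (abs_nonneg _)
  exact Summable.of_nonneg_of_le (fun k => sq_nonneg _) hb (hf.mul_left _)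

lemma n2_le_tsum_abs {f : ℕ → ℝ} (hf : Summable fun k => |f k|) :
    n2 f ≤ ∑' k, |f k| := by
  have hsq := sq_summable_of_abs hf
  have h1 : ∑' k, (f k)^2 ≤ (∑' k, |f k|)^2 := by
    have hb : ∀ k, (f k)^2 ≤ (∑' j, |f j|) * |f k| := fun k => by
      have h1 : |f k| ≤ ∑' j, |f j| := Summable.le_tsum hf k (fun j _ => abs_nonneg _)
      calc (f k)^2 = |f k| * |f k| := by rw [← sq_abs, sq]
      _ ≤ (∑' j, |f j|) * |f k| := mul_le_mul_of_nonneg_right h1 (abs_nonneg _)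
    calc ∑' k, (f k)^2 ≤ ∑' k, (∑' j, |f j|) * |f k| :=
          Summable.tsum_le_tsum hb hsq (hf.mul_left _)
    _ = (∑' j, |f j|) * ∑' k, |f k| := tsum_mul_left
    _ = (∑' k, |f k|)^2 := by ring
  calc n2 f ≤ Real.sqrt ((∑' k, |f k|)^2) := Real.sqrt_le_sqrt h1
  _ = ∑' k, |f k| := Real.sqrt_sq (tsum_nonneg fun k => abs_nonneg _)

/-- The map `g` from the Adam sequence space to `ℝ` (scalar case, index `k : ℕ`
corresponding to the nonpositive integer `-k`). If the denominator series diverges,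
`g` is defined to be `0`. -/
noncomputable def adamG (α β ε : ℝ) (x : ℕ → ℝ) : ℝ :=
  if (∑' k : ℕ, ENNReal.ofReal ((1 - β) * β ^ k * (x k) ^ 2)) = ∞ then 0
  else ((1 - α) * ∑' k : ℕ, α ^ k * x k) /
    (ε + Real.sqrt (∑' k : ℕ, ENNReal.ofReal ((1 - β) * β ^ k * (x k) ^ 2)).toReal)

lemma adamG_eq (α β ε : ℝ) (hβ1 : β < 1) {u : ℕ → ℝ}
    (hs : Summable fun k => β ^ k * (u k) ^ 2) (hnn : ∀ k, 0 ≤ (1 - β) * β ^ k * (u k) ^ 2) :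
    adamG α β ε u = ((1 - α) * ∑' k, α ^ k * u k) /
      (ε + Real.sqrt ((1 - β) * ∑' k, β ^ k * (u k) ^ 2)) := by
  have hsm : Summable fun k => (1 - β) * β ^ k * (u k) ^ 2 := by
    simpa [mul_assoc] using hs.mul_left (1 - β)
  have h1 : (∑' k : ℕ, ENNReal.ofReal ((1 - β) * β ^ k * (u k) ^ 2))
      = ENNReal.ofReal (∑' k, (1 - β) * β ^ k * (u k) ^ 2) :=
    (ENNReal.ofReal_tsum_of_nonneg hnn hsm).symm
  have h2 : ∑' k, (1 - β) * β ^ k * (u k) ^ 2 = (1 - β) * ∑' k, β ^ k * (u k) ^ 2 := by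
    simp_rw [mul_assoc]; exact tsum_mul_left
  rw [adamG, h1]
  rw [if_neg ENNReal.ofReal_ne_top, ENNReal.toReal_ofReal (tsum_nonneg hnn), h2]

/-- `g` is Lipschitz with constant `1` w.r.t. the weighted `ℓ¹`-norm
`‖x‖_{ℓ_ϱ} = Σ_k ϱ_k |x_k|`. -/
theorem stmt2_g_lipschitz (α β ε : ℝ) (hα : 0 ≤ α) (hαβ : α < Real.sqrt β)
    (hβ : Real.sqrt β < 1) (hε : 0 < ε)
    (ϱ : ℕ → ℝ)
    (hϱ : ∀ k : ℕ, ϱ k = (1 - α) * ε⁻¹ * (α ^ k + (1 / Real.sqrt (1 - α ^ 2 / β)) * (Real.sqrt β) ^ k))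
    (x y : ℕ → ℝ) (hx : Summable fun k => ϱ k * |x k|)
    (hy : Summable fun k => ϱ k * |y k|) :
    |adamG α β ε x - adamG α β ε y| ≤ ∑' k : ℕ, ϱ k * |x k - y k| := by
  set b := Real.sqrt β with hbdef
  have hb0 : 0 < b := lt_of_le_of_lt hα hαβ
  have hβ0 : 0 < β := Real.sqrt_pos.mp hb0
  have hb2 : b ^ 2 = β := Real.sq_sqrt hβ0.le
  have hβ1 : β < 1 := by nlinarith
  have h1β : 0 < 1 - β := by linarith
  have hα1 : α < 1 := hαβ.trans hβ
  have h1α : 0 < 1 - α := by linarith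
  have hαβ2 : α ^ 2 < β := by nlinarith
  have hdpos : 0 < 1 - α ^ 2 / β := by
    have : α ^ 2 / β < 1 := (div_lt_one hβ0).mpr hαβ2
    linarith
  set d := Real.sqrt (1 - α ^ 2 / β) with hddef
  have hd0 : 0 < d := Real.sqrt_pos.mpr hdpos
  set c := (1 - α) * ε⁻¹ with hcdef
  have hc0 : 0 < c := mul_pos h1α (inv_pos.mpr hε)
  -- summability extraction
  have key : ∀ u : ℕ → ℝ, (Summable fun k => ϱ k * |u k|) →
      (Summable fun k => α ^ k * |u k|) ∧ (Summable fun k => b ^ k * |u k|) := by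
    intro u hu
    constructor
    · have h1 : Summable fun k => c * (α ^ k * |u k|) := by
        apply Summable.of_nonneg_of_le (fun k => by positivity) _ hu
        intro k
        rw [hϱ k]
        have : 0 ≤ (1 / d) * b ^ k * |u k| := by positivity
        have hck : c * (α ^ k + 1 / d * b ^ k) * |u k|
            = c * (α ^ k * |u k|) + c * ((1/d) * b ^ k * |u k|) := by ring
        nlinarith [abs_nonneg (u k), pow_nonneg hα k, pow_nonneg hb0.le k]
      exact (summable_mul_left_iff hc0.ne').mp h1
    · have h1 : Summable fun k => (c * (1 / d)) * (b ^ k * |u k|) := by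
        apply Summable.of_nonneg_of_le (fun k => by positivity) _ hu
        intro k
        rw [hϱ k]
        nlinarith [abs_nonneg (u k), pow_nonneg hα k, pow_nonneg hb0.le k,
          mul_nonneg (pow_nonneg hα k) (abs_nonneg (u k))]
      exact (summable_mul_left_iff (by positivity : (0:ℝ) < c * (1/d)).ne').mp h1
  have hϱnn : ∀ k, 0 ≤ ϱ k := by
    intro k; rw [hϱ k]
    have : 0 ≤ α ^ k + 1 / d * b ^ k := by positivity
    positivity
  have hΔ : Summable fun k => ϱ k * |x k - y k| := by
    apply Summable.of_nonneg_of_le (fun k => mul_nonneg (hϱnn k) (abs_nonneg _)) _ (hx.add hy)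
    intro k
    have := abs_sub (x k) (y k)
    calc ϱ k * |x k - y k| ≤ ϱ k * (|x k| + |y k|) :=
          mul_le_mul_of_nonneg_left (abs_sub _ _) (hϱnn k)
    _ = ϱ k * |x k| + ϱ k * |y k| := by ring
  obtain ⟨sax, sbx⟩ := key x hx
  obtain ⟨say, sby⟩ := key y hy
  obtain ⟨saΔ, sbΔ⟩ := key _ hΔ
  -- signed and squared summability
  have sgn : ∀ u : ℕ → ℝ, (Summable fun k => α ^ k * |u k|) → Summable fun k => α ^ k * u k := by
    intro u hu
    apply Summable.of_abs
    simpa [abs_mul, abs_of_nonneg (pow_nonneg hα _)] using hu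
  have absb : ∀ u : ℕ → ℝ, (Summable fun k => b ^ k * |u k|) →
      Summable fun k => |b ^ k * u k| := by
    intro u hu
    simpa [abs_mul, abs_of_nonneg (pow_nonneg hb0.le _)] using hu
  have sqeq : ∀ (u : ℕ → ℝ) k, (b ^ k * u k) ^ 2 = β ^ k * (u k) ^ 2 := by
    intro u k
    rw [mul_pow, ← pow_mul, mul_comm k 2, pow_mul, hb2]
  have ssq : ∀ u : ℕ → ℝ, (Summable fun k => b ^ k * |u k|) →
      Summable fun k => β ^ k * (u k) ^ 2 := by
    intro u hu
    have := sq_summable_of_abs (absb u hu)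
    apply Summable.congr this
    intro k; exact sqeq u k
  have nnx : ∀ k, 0 ≤ (1 - β) * β ^ k * (x k) ^ 2 := fun k =>
    mul_nonneg (mul_nonneg h1β.le (pow_nonneg hβ0.le _)) (sq_nonneg _)
  have nny : ∀ k, 0 ≤ (1 - β) * β ^ k * (y k) ^ 2 := fun k =>
    mul_nonneg (mul_nonneg h1β.le (pow_nonneg hβ0.le _)) (sq_nonneg _)
  rw [adamG_eq α β ε hβ1 (ssq x sbx) nnx, adamG_eq α β ε hβ1 (ssq y sby) nny]
  -- notation
  set A := ∑' k, α ^ k * x k with hA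
  set B := ∑' k, α ^ k * y k with hB
  set ux : ℕ → ℝ := fun k => b ^ k * x k with hux
  set uy : ℕ → ℝ := fun k => b ^ k * y k with huy
  have sqx : Summable fun k => (ux k) ^ 2 := sq_summable_of_abs (absb x sbx)
  have sqy : Summable fun k => (uy k) ^ 2 := sq_summable_of_abs (absb y sby)
  set T1 := ∑' k, α ^ k * |x k - y k| with hT1
  set T2 := ∑' k, b ^ k * |x k - y k| with hT2
  have hT1nn : 0 ≤ T1 := tsum_nonneg fun k => by positivity
  have hT2nn : 0 ≤ T2 := tsum_nonneg fun k => by positivity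
  have hDx : Real.sqrt ((1 - β) * ∑' k, β ^ k * (x k) ^ 2) = Real.sqrt (1 - β) * n2 ux := by
    rw [Real.sqrt_mul h1β.le, n2]
    congr 2
    exact (tsum_congr fun k => sqeq x k).symm
  have hDy : Real.sqrt ((1 - β) * ∑' k, β ^ k * (y k) ^ 2) = Real.sqrt (1 - β) * n2 uy := by
    rw [Real.sqrt_mul h1β.le, n2]
    congr 2
    exact (tsum_congr fun k => sqeq y k).symm
  rw [hDx, hDy]
  set X := Real.sqrt (1 - β) * n2 ux with hX
  set Y := Real.sqrt (1 - β) * n2 uy with hY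
  have hX0 : 0 ≤ X := mul_nonneg (Real.sqrt_nonneg _) (n2_nonneg _)
  have hY0 : 0 ≤ Y := mul_nonneg (Real.sqrt_nonneg _) (n2_nonneg _)
  have hεX : 0 < ε + X := by linarith
  have hεY : 0 < ε + Y := by linarith
  -- bound 1 : |A - B| ≤ T1
  have hN : |A - B| ≤ T1 := by
    have h1 : A - B = ∑' k, (α ^ k * x k - α ^ k * y k) :=
      (Summable.tsum_sub (sgn x sax) (sgn y say)).symm
    have h2 : ∀ k, α ^ k * x k - α ^ k * y k = α ^ k * (x k - y k) := fun k => by ring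
    rw [h1, tsum_congr h2]
    have hs : Summable fun k => ‖α ^ k * (x k - y k)‖ := by
      simpa [Real.norm_eq_abs, abs_mul, abs_pow, abs_of_nonneg hα] using saΔ
    calc |∑' k, α ^ k * (x k - y k)| ≤ ∑' k, ‖α ^ k * (x k - y k)‖ := by
          simpa [Real.norm_eq_abs] using norm_tsum_le_tsum_norm hs
    _ = T1 := by
      rw [hT1]
      exact tsum_congr fun k => by
        simp [Real.norm_eq_abs, abs_mul, abs_pow, abs_of_nonneg hα]
  -- bound 2 : |B| ≤ (1/d) * n2 uy   (Cauchy-Schwarz)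
  have hCS : |B| ≤ (1 / d) * n2 uy := by
    have hfk : ∀ k : ℕ, ((α / b) ^ k) ^ 2 = ((α / b) ^ 2) ^ k := fun k => by
      rw [← pow_mul, mul_comm k 2, pow_mul]
    have hr2 : (α / b) ^ 2 = α ^ 2 / β := by rw [div_pow, hb2]
    have hrlt : (α / b) ^ 2 < 1 := by rw [hr2]; exact (div_lt_one hβ0).mpr hαβ2
    have hrnn : 0 ≤ (α / b) ^ 2 := sq_nonneg _
    have hsf : Summable fun k => ((α / b) ^ k) ^ 2 := by
      apply Summable.congr (summable_geometric_of_lt_one hrnn hrlt)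
      intro k; exact (hfk k).symm
    have hBeq : B = ∑' k, ((α / b) ^ k) * uy k := by
      rw [hB]
      apply tsum_congr
      intro k
      show α ^ k * y k = (α / b) ^ k * uy k
      rw [huy]
      show α ^ k * y k = (α / b) ^ k * (b ^ k * y k)
      rw [div_pow]
      field_simp
    have hcs := cs_tsum hsf sqy
    rw [← hBeq] at hcs
    have hn2f : n2 (fun k => (α / b) ^ k) = 1 / d := by
      rw [n2]
      have : ∑' k, ((α / b) ^ k) ^ 2 = (1 - α ^ 2 / β)⁻¹ := by
        rw [tsum_congr hfk, tsum_geometric_of_lt_one hrnn hrlt, hr2]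
      rw [this, Real.sqrt_inv, hddef, one_div]
    rw [hn2f] at hcs
    exact hcs
  -- bound 3 : |Y - X| ≤ √(1-β) * T2
  have hDdiff : |Y - X| ≤ Real.sqrt (1 - β) * T2 := by
    have h1 : |n2 uy - n2 ux| ≤ n2 (fun k => uy k - ux k) := rt_tsum sqy sqx
    have h2 : n2 (fun k => uy k - ux k) ≤ T2 := by
      have habs : ∀ k, |uy k - ux k| = b ^ k * |x k - y k| := by
        intro k
        show |b ^ k * y k - b ^ k * x k| = b ^ k * |x k - y k|
        rw [← abs_neg]
        rw [show -(b ^ k * y k - b ^ k * x k) = b ^ k * (x k - y k) by ring]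
        rw [abs_mul, abs_of_nonneg (pow_nonneg hb0.le _)]
      have hsum : Summable fun k => |uy k - ux k| := by
        apply Summable.congr sbΔ
        intro k; exact (habs k).symm
      calc n2 (fun k => uy k - ux k) ≤ ∑' k, |uy k - ux k| := n2_le_tsum_abs hsum
      _ = T2 := tsum_congr habs
    calc |Y - X| = Real.sqrt (1 - β) * |n2 uy - n2 ux| := by
          rw [hX, hY, ← mul_sub, abs_mul, abs_of_nonneg (Real.sqrt_nonneg _)]
    _ ≤ Real.sqrt (1 - β) * n2 (fun k => uy k - ux k) :=
          mul_le_mul_of_nonneg_left h1 (Real.sqrt_nonneg _)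
    _ ≤ Real.sqrt (1 - β) * T2 := mul_le_mul_of_nonneg_left h2 (Real.sqrt_nonneg _)
  -- decomposition
  have decomp : (1 - α) * A / (ε + X) - (1 - α) * B / (ε + Y)
      = ((1 - α) * (A - B)) / (ε + X) + ((1 - α) * B) * (Y - X) / ((ε + X) * (ε + Y)) := by
    field_simp
    ring
  rw [decomp]
  have habs1 : |((1 - α) * (A - B)) / (ε + X)| ≤ (1 - α) * T1 / ε := by
    rw [abs_div, abs_of_pos hεX, abs_mul, abs_of_pos h1α]
    apply div_le_div₀ (mul_nonneg h1α.le hT1nn) _ hε (by linarith)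
    exact mul_le_mul_of_nonneg_left hN h1α.le
  have habs2 : |((1 - α) * B) * (Y - X) / ((ε + X) * (ε + Y))| ≤ (1 - α) * ((1/d) * T2) / ε := by
    rw [abs_div, abs_of_pos (mul_pos hεX hεY), abs_mul, abs_mul, abs_of_pos h1α]
    have hnum : (1 - α) * |B| * |Y - X| ≤ (1 - α) * ((1/d) * T2) * Y := by
      have h1 : (1 - α) * |B| * |Y - X| ≤ (1 - α) * ((1/d) * n2 uy) * (Real.sqrt (1 - β) * T2) := by
        apply mul_le_mul _ hDdiff (abs_nonneg _)
          (mul_nonneg h1α.le (mul_nonneg (by positivity) (n2_nonneg _)))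
        exact mul_le_mul_of_nonneg_left hCS h1α.le
      calc (1 - α) * |B| * |Y - X| ≤ (1 - α) * ((1/d) * n2 uy) * (Real.sqrt (1 - β) * T2) := h1
      _ = (1 - α) * ((1/d) * T2) * (Real.sqrt (1 - β) * n2 uy) := by ring
      _ = (1 - α) * ((1/d) * T2) * Y := by rw [hY]
    have hC : 0 ≤ (1 - α) * ((1/d) * T2) :=
      mul_nonneg h1α.le (mul_nonneg (by positivity) hT2nn)
    calc (1 - α) * |B| * |Y - X| / ((ε + X) * (ε + Y))
        ≤ (1 - α) * ((1/d) * T2) * Y / ((ε + X) * (ε + Y)) :=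
          (div_le_div_iff_of_pos_right (mul_pos hεX hεY)).mpr hnum
    _ ≤ (1 - α) * ((1/d) * T2) / ε := by
          rw [div_le_div_iff₀ (mul_pos hεX hεY) hε]
          have hYε : Y * ε ≤ (ε + X) * (ε + Y) := by
            have hexp : (ε + X) * (ε + Y) = Y * ε + (ε * ε + X * ε + X * Y) := by ring
            rw [hexp]
            linarith [mul_pos hε hε, mul_nonneg hX0 hε.le, mul_nonneg hX0 hY0]
          calc (1 - α) * ((1/d) * T2) * Y * ε = ((1 - α) * ((1/d) * T2)) * (Y * ε) := by ring
          _ ≤ ((1 - α) * ((1/d) * T2)) * ((ε + X) * (ε + Y)) :=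
            mul_le_mul_of_nonneg_left hYε hC
          _ = (1 - α) * ((1/d) * T2) * ((ε + X) * (ε + Y)) := by ring
  -- right-hand side
  have hRHS : ∑' k, ϱ k * |x k - y k| = (1 - α) * T1 / ε + (1 - α) * ((1/d) * T2) / ε := by
    have h1 : ∀ k, ϱ k * |x k - y k|
        = c * (α ^ k * |x k - y k| + (1/d) * (b ^ k * |x k - y k|)) := by
      intro k; rw [hϱ k]; ring
    rw [tsum_congr h1, tsum_mul_left,
      Summable.tsum_add saΔ (sbΔ.mul_left (1/d)), tsum_mul_left, ← hT1, ← hT2]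
    rw [hcdef]
    field_simp
  rw [hRHS]
  calc |((1 - α) * (A - B)) / (ε + X) + ((1 - α) * B) * (Y - X) / ((ε + X) * (ε + Y))|
      ≤ |((1 - α) * (A - B)) / (ε + X)| + |((1 - α) * B) * (Y - X) / ((ε + X) * (ε + Y))| :=
        abs_add_le _ _
  _ ≤ (1 - α) * T1 / ε + (1 - α) * ((1/d) * T2) / ε := add_le_add habs1 habs2
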